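/- (Convergence of the idealized two-timescale MFG scheme.) Under Assumption (Lip), L_p < |𝒳|c_min, and 0 < φ < φ_max, let (ρ^Q_n)_n and (ρ^μ_n)_n be sequences in (0,1) with ∑_n ρ^Q_n = ∑_n ρ^μ_n = ∞, ∑_n ((ρ^Q_n)² + (ρ^μ_n)²) < ∞, and ρ^μ_n/ρ^Q_n → 0 as n → ∞. Define, from any initial (Q₀,μ₀) ∈ ℝ^{𝒳×𝒜} × Δ(𝒳), the iterates μ_{n+1} = μ_n + ρ^μ_n P₂(Q_n,μ_n) and Q_{n+1} = Q_n + ρ^Q_n T₂(Q_n,μ_n). Then (μ_n, Q_n) converges as n → ∞ to (μ*φ, Q*_{μ*φ}), where μ*φ is the unique fixed point of μ ↦ P^{softmin_φ Q*_μ, μ}μ and Q*_{μ*φ} is the unique fixed point of B_{μ*φ}. -/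

import Mathlib

open Finset Filter
open scoped Classical

noncomputable section

variable {X A : Type*}

/-- A probability vector on a finite set. -/
def IsProb [Fintype X] (μ : X → ℝ) : Prop := (∀ x, 0 ≤ μ x) ∧ ∑ x, μ x = 1

/-- ℓ¹ norm of a signed measure / vector on a finite set. -/
def l1 [Fintype X] (μ : X → ℝ) : ℝ := ∑ x, |μ x|

/-- Sup norm of a Q-table. -/
def supQ [Fintype X] [Fintype A] [Nonempty X] [Nonempty A] (Q : X → A → ℝ) : ℝ :=
  Finset.univ.sup' Finset.univ_nonempty (fun xa : X × A => |Q xa.1 xa.2|)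

/-- Minimum of a row of a Q-table (minimum over actions). -/
def minRow [Fintype A] [Nonempty A] (q : A → ℝ) : ℝ :=
  Finset.univ.inf' Finset.univ_nonempty q

/-- The soft-min distribution over actions with parameter φ. -/
def softmin [Fintype A] (φ : ℝ) (z : A → ℝ) (a : A) : ℝ :=
  Real.exp (-φ * z a) / ∑ a', Real.exp (-φ * z a')

/-- The argmin_e policy: uniform over the minimizers, zero elsewhere. -/
def argminE [Fintype A] [Nonempty A] (q : A → ℝ) (a : A) : ℝ :=
  if q a = minRow q then (1 : ℝ) / (Finset.univ.filter fun a' => q a' = minRow q).card else 0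

/-- (P^{π,μ} ν)(x) = ∑_{x'} ν(x') ∑_a π(a|x') p(x|x',a,μ). -/
def Ppush [Fintype X] [Fintype A] (p : X → A → (X → ℝ) → X → ℝ)
    (π : X → A → ℝ) (μ ν : X → ℝ) (x : X) : ℝ :=
  ∑ x', ν x' * ∑ a, π x' a * p x' a μ x

/-- P₂(Q,μ) = P^{softmin_φ Q, μ} μ − μ. -/
def P2 [Fintype X] [Fintype A] (φ : ℝ) (p : X → A → (X → ℝ) → X → ℝ)
    (Q : X → A → ℝ) (μ : X → ℝ) (x : X) : ℝ :=
  Ppush p (fun x' => softmin φ (Q x')) μ μ x - μ x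

/-- The Bellman operator (B_μ Q)(x,a) = f(x,a,μ) + γ ∑_{x'} p(x'|x,a,μ) min_{a'} Q(x',a'). -/
def bell [Fintype X] [Fintype A] [Nonempty A]
    (f : X → A → (X → ℝ) → ℝ) (p : X → A → (X → ℝ) → X → ℝ) (γ : ℝ)
    (μ : X → ℝ) (Q : X → A → ℝ) (x : X) (a : A) : ℝ :=
  f x a μ + γ * ∑ x', p x a μ x' * minRow (Q x')

/-- T₂(Q,μ) = B_μ Q − Q. -/
def T2 [Fintype X] [Fintype A] [Nonempty A]
    (f : X → A → (X → ℝ) → ℝ) (p : X → A → (X → ℝ) → X → ℝ) (γ : ℝ)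
    (Q : X → A → ℝ) (μ : X → ℝ) (x : X) (a : A) : ℝ :=
  bell f p γ μ Q x a - Q x a

set_option linter.unusedSectionVars false
section MyAux
variable [Fintype X] [Fintype A] [Nonempty X] [Nonempty A]

lemma my_l1_nonneg (μ : X → ℝ) : 0 ≤ l1 μ := Finset.sum_nonneg fun _ _ => abs_nonneg _

lemma my_abs_le_l1 (μ : X → ℝ) (x : X) : |μ x| ≤ l1 μ := by
  unfold l1; exact Finset.single_le_sum (f := fun y => |μ y|) (fun _ _ => abs_nonneg _) (mem_univ x)

lemma my_le_supQ (Q : X → A → ℝ) (x : X) (a : A) : |Q x a| ≤ supQ Q := by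
  unfold supQ
  exact Finset.le_sup' (f := fun xa : X × A => |Q xa.1 xa.2|) (mem_univ (x, a))

lemma my_supQ_le {Q : X → A → ℝ} {M : ℝ} (h : ∀ x a, |Q x a| ≤ M) : supQ Q ≤ M :=
  Finset.sup'_le _ _ fun xa _ => h xa.1 xa.2

lemma my_supQ_nonneg (Q : X → A → ℝ) : 0 ≤ supQ Q :=
  le_trans (abs_nonneg _) (my_le_supQ Q (Classical.arbitrary X) (Classical.arbitrary A))

lemma my_minRow_le (q : A → ℝ) (a : A) : minRow q ≤ q a := Finset.inf'_le _ (mem_univ a)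

lemma my_minRow_eq (q : A → ℝ) : ∃ a, minRow q = q a := by
  obtain ⟨a, -, ha⟩ := Finset.exists_mem_eq_inf' Finset.univ_nonempty q
  exact ⟨a, ha⟩

lemma my_abs_minRow_le {q : A → ℝ} {M : ℝ} (h : ∀ a, |q a| ≤ M) : |minRow q| ≤ M := by
  obtain ⟨a, ha⟩ := my_minRow_eq q; rw [ha]; exact h a

lemma my_abs_minRow_sub {q q' : A → ℝ} {M : ℝ} (h : ∀ a, |q a - q' a| ≤ M) :
    |minRow q - minRow q'| ≤ M := by
  obtain ⟨a, ha⟩ := my_minRow_eq q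
  obtain ⟨a', ha'⟩ := my_minRow_eq q'
  have h1 := abs_le.1 (h a); have h2 := abs_le.1 (h a')
  have l1 := my_minRow_le q a'; have l2 := my_minRow_le q' a
  rw [abs_le]; constructor <;> [linarith [ha, ha']; linarith [ha, ha']]

lemma my_softmin_denom_pos (φ : ℝ) (z : A → ℝ) : 0 < ∑ a', Real.exp (-φ * z a') :=
  Finset.sum_pos (fun _ _ => Real.exp_pos _) Finset.univ_nonempty

lemma my_softmin_nonneg (φ : ℝ) (z : A → ℝ) (a : A) : 0 ≤ softmin φ z a :=
  div_nonneg (Real.exp_pos _).le (my_softmin_denom_pos φ z).le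

lemma my_softmin_sum (φ : ℝ) (z : A → ℝ) : ∑ a, softmin φ z a = 1 := by
  unfold softmin
  rw [← Finset.sum_div, div_self (ne_of_gt (my_softmin_denom_pos φ z))]

end MyAux
set_option linter.unusedSectionVars false
set_option maxHeartbeats 1000000
section MyAux2
variable [Fintype X] [Fintype A] [Nonempty X] [Nonempty A]

lemma my_softmin_lip (φ : ℝ) (hφ : 0 ≤ φ) (z z' : A → ℝ) (δ : ℝ)
    (hδ : ∀ a, |z' a - z a| ≤ δ) :
    ∑ a, |softmin φ z' a - softmin φ z a| ≤ 2 * φ * δ := by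
  obtain ⟨a0⟩ := (inferInstance : Nonempty A)
  have hδ0 : 0 ≤ δ := le_trans (abs_nonneg _) (hδ a0)
  set w : A → ℝ := fun b => z' b - z b with hw
  set σ : A → ℝ := fun a => if 0 ≤ softmin φ z' a - softmin φ z a then 1 else -1 with hσ
  set N : ℝ → A → ℝ := fun t b => Real.exp (-φ * (z b + t * w b)) with hN
  set S : ℝ → ℝ := fun t => ∑ b, N t b with hS
  have hSpos : ∀ t, 0 < S t :=
    fun t => Finset.sum_pos (fun _ _ => Real.exp_pos _) Finset.univ_nonempty
  have hNpos : ∀ t b, 0 < N t b := fun t b => Real.exp_pos _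
  have hsoft : ∀ t a, softmin φ (fun b => z b + t * w b) a = N t a / S t := fun t a => rfl
  set D : ℝ → A → ℝ := fun t a =>
    ((N t a * (-φ * w a)) * S t - N t a * (∑ b, N t b * (-φ * w b))) / (S t)^2 with hD
  set g : ℝ → ℝ := fun t => ∑ a, σ a * (N t a / S t) with hg
  have hNa : ∀ t b, HasDerivAt (fun t => N t b) (N t b * (-φ * w b)) t := by
    intro t b
    have h1 : HasDerivAt (fun t : ℝ => -φ * (z b + t * w b)) (-φ * (1 * w b)) t :=
      (((hasDerivAt_id t).mul_const (w b)).const_add (z b)).const_mul (-φ)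
    have h2 := h1.exp
    simp only [one_mul] at h2
    exact h2
  have hderiv : ∀ t, HasDerivAt g (∑ a, σ a * D t a) t := by
    intro t
    apply HasDerivAt.fun_sum
    intro a _
    exact ((hNa t a).div (HasDerivAt.fun_sum fun b _ => hNa t b) (ne_of_gt (hSpos t))).const_mul (σ a)
  have hsum1 : ∀ t, ∑ a, N t a / S t = 1 := by
    intro t
    rw [← Finset.sum_div, div_self (ne_of_gt (hSpos t))]
  have hbound : ∀ t, |∑ a, σ a * D t a| ≤ 2 * φ * δ := by
    intro t
    have havg : |∑ b, w b * (N t b / S t)| ≤ δ := by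
      calc |∑ b, w b * (N t b / S t)| ≤ ∑ b, |w b * (N t b / S t)| :=
            Finset.abs_sum_le_sum_abs _ _
        _ ≤ ∑ b, δ * (N t b / S t) := by
            apply Finset.sum_le_sum; intro b _
            rw [abs_mul, abs_of_nonneg (by positivity : (0:ℝ) ≤ N t b / S t)]
            exact mul_le_mul_of_nonneg_right (hδ b) (by positivity)
        _ = δ := by rw [← Finset.mul_sum, hsum1, mul_one]
    calc |∑ a, σ a * D t a| ≤ ∑ a, |σ a * D t a| := Finset.abs_sum_le_sum_abs _ _
      _ ≤ ∑ a, (N t a / S t) * (2 * φ * δ) := by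
          apply Finset.sum_le_sum; intro a _
          have hσ1 : |σ a| = 1 := by
            rw [hσ]; dsimp only; split <;> simp
          rw [abs_mul, hσ1, one_mul]
          have hDa : D t a = φ * (N t a / S t) * ((∑ b, w b * (N t b / S t)) - w a) := by
            have hS0 : S t ≠ 0 := ne_of_gt (hSpos t)
            have hW : ∑ b, N t b * (-φ * w b) = -φ * ∑ b, w b * N t b := by
              rw [Finset.mul_sum]; exact Finset.sum_congr rfl fun b _ => by ring
            have hW2 : ∑ b, w b * (N t b / S t) = (∑ b, w b * N t b) / S t := by
              rw [Finset.sum_div]; exact Finset.sum_congr rfl fun b _ => (mul_div_assoc _ _ _).symm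
            rw [hD]; dsimp only; rw [hW, hW2]
            field_simp
            ring
          rw [hDa, abs_mul, abs_mul, abs_of_nonneg hφ,
            abs_of_nonneg (by positivity : (0:ℝ) ≤ N t a / S t)]
          have h2δ : |(∑ b, w b * (N t b / S t)) - w a| ≤ 2 * δ := by
            have := hδ a
            calc |(∑ b, w b * (N t b / S t)) - w a|
                ≤ |∑ b, w b * (N t b / S t)| + |w a| := abs_sub _ _
              _ ≤ δ + δ := add_le_add havg (hδ a)
              _ = 2 * δ := by ring
          calc φ * (N t a / S t) * |(∑ b, w b * (N t b / S t)) - w a|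
              ≤ φ * (N t a / S t) * (2 * δ) := by
                apply mul_le_mul_of_nonneg_left h2δ (by positivity)
            _ = N t a / S t * (2 * φ * δ) := by ring
      _ = 2 * φ * δ := by rw [← Finset.sum_mul, hsum1, one_mul]
  have key : |g 1 - g 0| ≤ 2 * φ * δ := by
    have h := Convex.norm_image_sub_le_of_norm_hasDerivWithin_le
      (f := g) (f' := fun t => ∑ a, σ a * D t a) (s := Set.univ) (C := 2 * φ * δ)
      (fun t _ => (hderiv t).hasDerivWithinAt) (fun t _ => by simpa using hbound t)
      convex_univ (Set.mem_univ (0:ℝ)) (Set.mem_univ (1:ℝ))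
    simpa using h
  have hz1 : (fun b => z b + 1 * w b) = z' := by funext b; rw [hw]; ring
  have hz0 : (fun b => z b + 0 * w b) = z := by funext b; ring
  have hg1 : g 1 = ∑ a, σ a * softmin φ z' a := by
    rw [hg]; apply Finset.sum_congr rfl; intro a _
    rw [← hsoft 1 a, hz1]
  have hg0 : g 0 = ∑ a, σ a * softmin φ z a := by
    rw [hg]; apply Finset.sum_congr rfl; intro a _
    rw [← hsoft 0 a, hz0]
  have hfinal : ∑ a, |softmin φ z' a - softmin φ z a| = g 1 - g 0 := by
    rw [hg1, hg0, ← Finset.sum_sub_distrib]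
    apply Finset.sum_congr rfl; intro a _
    rw [hσ]; dsimp only
    split_ifs with h
    · rw [abs_of_nonneg h]; ring
    · rw [abs_of_neg (not_le.1 h)]; ring
  rw [hfinal]
  exact le_trans (le_abs_self _) key

end MyAux2
section MyAux3
variable [Fintype X] [Fintype A] [Nonempty X] [Nonempty A]

lemma my_ppush_prob (p : X → A → (X → ℝ) → X → ℝ) (π : X → A → ℝ) (μ ν : X → ℝ)
    (hπ0 : ∀ x a, 0 ≤ π x a) (hπ1 : ∀ x, ∑ a, π x a = 1)
    (hp0 : ∀ x a x', 0 ≤ p x a μ x') (hp1 : ∀ x a, ∑ x', p x a μ x' = 1)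
    (hν : IsProb ν) : IsProb (Ppush p π μ ν) := by
  constructor
  · intro x
    apply Finset.sum_nonneg; intro x' _
    exact mul_nonneg (hν.1 x')
      (Finset.sum_nonneg fun a _ => mul_nonneg (hπ0 x' a) (hp0 x' a x))
  · unfold Ppush
    rw [Finset.sum_comm]
    have h : ∀ x', ∑ x, ν x' * ∑ a, π x' a * p x' a μ x = ν x' := by
      intro x'
      rw [← Finset.mul_sum, Finset.sum_comm]
      have h2 : ∑ a, ∑ x, π x' a * p x' a μ x = ∑ a, π x' a := by
        apply Finset.sum_congr rfl; intro a _
        rw [← Finset.mul_sum, hp1, mul_one]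
      rw [h2, hπ1, mul_one]
    rw [Finset.sum_congr rfl fun x' _ => h x']
    exact hν.2

lemma my_dobrushin (c : ℝ) (K : X → X → ℝ) (m : X → ℝ)
    (hK : ∀ x' x, c ≤ K x' x) (hK1 : ∀ x', ∑ x, K x' x = 1)
    (hm : ∑ x', m x' = 0) :
    ∑ x, |∑ x', m x' * K x' x| ≤ (1 - (Fintype.card X : ℝ) * c) * ∑ x', |m x'| := by
  have h1 : ∀ x, ∑ x', m x' * K x' x = ∑ x', m x' * (K x' x - c) := by
    intro x
    have : ∑ x', m x' * (K x' x - c) = ∑ x', m x' * K x' x - (∑ x', m x') * c := by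
      rw [Finset.sum_mul, ← Finset.sum_sub_distrib]
      exact Finset.sum_congr rfl fun x' _ => by ring
    rw [this, hm, zero_mul, sub_zero]
  calc ∑ x, |∑ x', m x' * K x' x| = ∑ x, |∑ x', m x' * (K x' x - c)| := by
        exact Finset.sum_congr rfl fun x _ => by rw [h1]
    _ ≤ ∑ x, ∑ x', |m x'| * (K x' x - c) := by
        apply Finset.sum_le_sum; intro x _
        refine le_trans (Finset.abs_sum_le_sum_abs _ _) (Finset.sum_le_sum fun x' _ => ?_)
        rw [abs_mul, abs_of_nonneg (sub_nonneg.2 (hK x' x))]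
    _ = ∑ x', |m x'| * (1 - (Fintype.card X : ℝ) * c) := by
        rw [Finset.sum_comm]
        apply Finset.sum_congr rfl; intro x' _
        rw [← Finset.mul_sum, Finset.sum_sub_distrib, hK1, Finset.sum_const, Finset.card_univ,
          nsmul_eq_mul]
    _ = (1 - (Fintype.card X : ℝ) * c) * ∑ x', |m x'| := by
        rw [← Finset.sum_mul, mul_comm]

lemma my_ppush_pi_var (p : X → A → (X → ℝ) → X → ℝ) (π π' : X → A → ℝ) (μ ν : X → ℝ) (η : ℝ)
    (hν : IsProb ν) (hp0 : ∀ x a x', 0 ≤ p x a μ x') (hp1 : ∀ x a, ∑ x', p x a μ x' = 1)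
    (hπ : ∀ x', ∑ a, |π x' a - π' x' a| ≤ η) :
    l1 (fun x => Ppush p π μ ν x - Ppush p π' μ ν x) ≤ η := by
  have hη : 0 ≤ η := le_trans (Finset.sum_nonneg fun a _ => abs_nonneg _) (hπ (Classical.arbitrary X))
  have key : ∀ x, Ppush p π μ ν x - Ppush p π' μ ν x
      = ∑ x', ν x' * ∑ a, (π x' a - π' x' a) * p x' a μ x := by
    intro x; unfold Ppush
    rw [← Finset.sum_sub_distrib]
    apply Finset.sum_congr rfl; intro x' _
    rw [← mul_sub, ← Finset.sum_sub_distrib]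
    congr 1
    exact Finset.sum_congr rfl fun a _ => by ring
  unfold l1
  calc ∑ x, |Ppush p π μ ν x - Ppush p π' μ ν x|
      ≤ ∑ x, ∑ x', ν x' * ∑ a, |π x' a - π' x' a| * p x' a μ x := by
        apply Finset.sum_le_sum; intro x _
        rw [key x]
        refine le_trans (Finset.abs_sum_le_sum_abs _ _) (Finset.sum_le_sum fun x' _ => ?_)
        rw [abs_mul, abs_of_nonneg (hν.1 x')]
        refine mul_le_mul_of_nonneg_left ?_ (hν.1 x')
        refine le_trans (Finset.abs_sum_le_sum_abs _ _) (Finset.sum_le_sum fun a _ => ?_)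
        rw [abs_mul, abs_of_nonneg (hp0 x' a x)]
    _ = ∑ x', ν x' * ∑ a, |π x' a - π' x' a| := by
        rw [Finset.sum_comm]
        apply Finset.sum_congr rfl; intro x' _
        rw [← Finset.mul_sum]
        congr 1
        rw [Finset.sum_comm]
        apply Finset.sum_congr rfl; intro a _
        rw [← Finset.mul_sum, hp1, mul_one]
    _ ≤ ∑ x', ν x' * η := Finset.sum_le_sum fun x' _ => mul_le_mul_of_nonneg_left (hπ x') (hν.1 x')
    _ = η := by rw [← Finset.sum_mul, hν.2, one_mul]

lemma my_ppush_mu_var (p : X → A → (X → ℝ) → X → ℝ) (π : X → A → ℝ) (μ μ' ν : X → ℝ) (L : ℝ)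
    (hν : IsProb ν) (hπ0 : ∀ x a, 0 ≤ π x a) (hπ1 : ∀ x, ∑ a, π x a = 1)
    (hL : ∀ x a, ∑ x', |p x a μ x' - p x a μ' x'| ≤ L) :
    l1 (fun x => Ppush p π μ ν x - Ppush p π μ' ν x) ≤ L := by
  have hL0 : 0 ≤ L := le_trans (Finset.sum_nonneg fun _ _ => abs_nonneg _)
    (hL (Classical.arbitrary X) (Classical.arbitrary A))
  have key : ∀ x, Ppush p π μ ν x - Ppush p π μ' ν x
      = ∑ x', ν x' * ∑ a, π x' a * (p x' a μ x - p x' a μ' x) := by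
    intro x; unfold Ppush
    rw [← Finset.sum_sub_distrib]
    apply Finset.sum_congr rfl; intro x' _
    rw [← mul_sub, ← Finset.sum_sub_distrib]
    congr 1
    exact Finset.sum_congr rfl fun a _ => by ring
  unfold l1
  calc ∑ x, |Ppush p π μ ν x - Ppush p π μ' ν x|
      ≤ ∑ x, ∑ x', ν x' * ∑ a, π x' a * |p x' a μ x - p x' a μ' x| := by
        apply Finset.sum_le_sum; intro x _
        rw [key x]
        refine le_trans (Finset.abs_sum_le_sum_abs _ _) (Finset.sum_le_sum fun x' _ => ?_)
        rw [abs_mul, abs_of_nonneg (hν.1 x')]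
        refine mul_le_mul_of_nonneg_left ?_ (hν.1 x')
        refine le_trans (Finset.abs_sum_le_sum_abs _ _) (Finset.sum_le_sum fun a _ => ?_)
        rw [abs_mul, abs_of_nonneg (hπ0 x' a)]
    _ = ∑ x', ν x' * ∑ a, π x' a * ∑ x, |p x' a μ x - p x' a μ' x| := by
        rw [Finset.sum_comm]
        apply Finset.sum_congr rfl; intro x' _
        rw [← Finset.mul_sum]
        congr 1
        rw [Finset.sum_comm]
        exact Finset.sum_congr rfl fun a _ => (Finset.mul_sum _ _ _).symm
    _ ≤ ∑ x', ν x' * ∑ a, π x' a * L := by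
        apply Finset.sum_le_sum; intro x' _
        refine mul_le_mul_of_nonneg_left (Finset.sum_le_sum fun a _ => ?_) (hν.1 x')
        exact mul_le_mul_of_nonneg_left (hL x' a) (hπ0 x' a)
    _ = L := by
        have : ∀ x', ∑ a, π x' a * L = L := by
          intro x'; rw [← Finset.sum_mul, hπ1, one_mul]
        rw [Finset.sum_congr rfl fun x' _ => by rw [this x'], ← Finset.sum_mul, hν.2, one_mul]

end MyAux3
lemma my_rec_tendsto (a ρ ε : ℕ → ℝ) (c : ℝ) (hc0 : 0 < c) (hc1 : c ≤ 1)
    (ha : ∀ n, 0 ≤ a n) (hρ0 : ∀ n, 0 < ρ n) (hρ1 : ∀ n, ρ n < 1)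
    (hdiv : ¬ Summable ρ)
    (hε : Filter.Tendsto ε Filter.atTop (nhds 0))
    (hrec : ∀ n, a (n + 1) ≤ (1 - c * ρ n) * a n + ρ n * ε n) :
    Filter.Tendsto a Filter.atTop (nhds 0) := by
  rw [Metric.tendsto_atTop]
  intro r hr
  obtain ⟨N, hN⟩ := (Metric.tendsto_atTop.1 hε) (c * r / 2) (by positivity)
  have hεle : ∀ n, N ≤ n → ε n ≤ c * r / 2 := by
    intro n hn
    have h := hN n hn
    rw [Real.dist_eq, sub_zero] at h
    exact le_of_lt (lt_of_abs_lt h)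
  set b : ℕ → ℝ := fun n => max (a n - r / 2) 0 with hb
  have hb0 : ∀ n, 0 ≤ b n := fun n => le_max_right _ _
  have hcρ : ∀ n, 0 ≤ 1 - c * ρ n := by
    intro n; have h1 := hρ0 n; have h2 := hρ1 n; nlinarith
  have hbrec : ∀ n, N ≤ n → b (n + 1) ≤ (1 - c * ρ n) * b n := by
    intro n hn
    have h1 : a (n + 1) - r / 2 ≤ (1 - c * ρ n) * (a n - r / 2) := by
      have h2 := hrec n; have h3 := hεle n hn; have h4 := hρ0 n; nlinarith
    rw [hb]; dsimp only
    apply max_le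
    · calc a (n + 1) - r / 2 ≤ (1 - c * ρ n) * (a n - r / 2) := h1
        _ ≤ (1 - c * ρ n) * max (a n - r / 2) 0 :=
            mul_le_mul_of_nonneg_left (le_max_left _ _) (hcρ n)
    · exact mul_nonneg (hcρ n) (hb0 n)
  have hexp : ∀ k, b (N + k) ≤ b N * Real.exp (-(c * ∑ i ∈ Finset.range k, ρ (N + i))) := by
    intro k; induction k with
    | zero => simp
    | succ k ih =>
      have h2 := hbrec (N + k) (Nat.le_add_right N k)
      have h3 : 1 - c * ρ (N + k) ≤ Real.exp (-(c * ρ (N + k))) := by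
        have := Real.add_one_le_exp (-(c * ρ (N + k))); linarith
      have step : b (N + (k + 1)) ≤ (1 - c * ρ (N + k)) * b (N + k) := by
        have he : N + (k + 1) = (N + k) + 1 := by omega
        rw [he]; exact h2
      calc b (N + (k + 1)) ≤ (1 - c * ρ (N + k)) * b (N + k) := step
        _ ≤ Real.exp (-(c * ρ (N + k))) *
            (b N * Real.exp (-(c * ∑ i ∈ Finset.range k, ρ (N + i)))) :=
            mul_le_mul h3 ih (hb0 _) (Real.exp_pos _).le
        _ = b N * Real.exp (-(c * ∑ i ∈ Finset.range (k + 1), ρ (N + i))) := by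
            rw [Finset.sum_range_succ, show -(c * (∑ x ∈ Finset.range k, ρ (N + x) + ρ (N + k)))
              = -(c * ρ (N + k)) + -(c * ∑ i ∈ Finset.range k, ρ (N + i)) from by ring,
              Real.exp_add]; ring
  have hdivN : ¬ Summable (fun i => ρ (N + i)) := by
    intro h
    apply hdiv
    rw [← summable_nat_add_iff (f := ρ) N]
    exact h.congr fun i => by rw [Nat.add_comm]
  have hS : Filter.Tendsto (fun k => ∑ i ∈ Finset.range k, ρ (N + i)) Filter.atTop Filter.atTop :=
    (not_summable_iff_tendsto_nat_atTop_of_nonneg (fun i => (hρ0 _).le)).1 hdivN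
  have htend0 : Filter.Tendsto
      (fun k => b N * Real.exp (-(c * ∑ i ∈ Finset.range k, ρ (N + i))))
      Filter.atTop (nhds 0) := by
    have h4 : Filter.Tendsto (fun k => -(c * ∑ i ∈ Finset.range k, ρ (N + i)))
        Filter.atTop Filter.atBot :=
      Filter.tendsto_neg_atTop_atBot.comp (hS.const_mul_atTop hc0)
    have h5 := Real.tendsto_exp_atBot.comp h4
    simpa using h5.const_mul (b N)
  obtain ⟨K, hK⟩ := (Metric.tendsto_atTop.1 htend0) (r / 2) (by positivity)
  refine ⟨N + K, fun n hn => ?_⟩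
  obtain ⟨k, rfl, hKk⟩ : ∃ k, n = N + k ∧ K ≤ k := ⟨n - N, by omega, by omega⟩
  have h5 := hK k hKk
  rw [Real.dist_eq, sub_zero] at h5 ⊢
  have h6 : b (N + k) < r / 2 := lt_of_le_of_lt (hexp k) (lt_of_abs_lt h5)
  rw [abs_of_nonneg (ha _)]
  have h7 : a (N + k) - r / 2 ≤ b (N + k) := le_max_left _ _
  linarith
section MyAux5
variable [Fintype X] [Fintype A] [Nonempty X] [Nonempty A]

lemma my_softmin_lipA (φ : ℝ) (hφ : 0 ≤ φ) (z z' : A → ℝ) (δ : ℝ) (hδ0 : 0 ≤ δ)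
    (hδ : ∀ a, |z' a - z a| ≤ δ) :
    ∑ a, |softmin φ z' a - softmin φ z a| ≤ (Fintype.card A : ℝ) * φ * δ := by
  rcases le_or_gt 2 (Fintype.card A) with h | h
  · refine (my_softmin_lip φ hφ z z' δ hδ).trans ?_
    have h2 : (2:ℝ) ≤ (Fintype.card A : ℝ) := by exact_mod_cast h
    have hφδ : 0 ≤ φ * δ := mul_nonneg hφ hδ0
    nlinarith
  · have h1 : Fintype.card A = 1 := le_antisymm (by omega) Fintype.card_pos
    obtain ⟨a0, ha0⟩ := Fintype.card_eq_one_iff.1 h1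
    have huniv : (Finset.univ : Finset A) = {a0} := by
      ext a; simp [ha0 a]
    have hs : ∀ (y : A → ℝ) (a : A), softmin φ y a = 1 := by
      intro y a
      unfold softmin
      rw [huniv, Finset.sum_singleton, ha0 a, div_self (Real.exp_ne_zero _)]
    rw [huniv, Finset.sum_singleton, hs, hs]
    simp
    positivity

lemma my_l1_tri4 (u v w t s : X → ℝ) :
    l1 (fun x => u x - s x) ≤ l1 (fun x => u x - v x) + l1 (fun x => v x - w x)
      + l1 (fun x => w x - t x) + l1 (fun x => t x - s x) := by
  unfold l1
  rw [← Finset.sum_add_distrib, ← Finset.sum_add_distrib, ← Finset.sum_add_distrib]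
  apply Finset.sum_le_sum
  intro x _
  calc |u x - s x| ≤ |u x - v x| + |v x - s x| := abs_sub_le _ _ _
    _ ≤ |u x - v x| + (|v x - w x| + |w x - s x|) := by
        have := abs_sub_le (v x) (w x) (s x); linarith
    _ ≤ |u x - v x| + (|v x - w x| + (|w x - t x| + |t x - s x|)) := by
        have := abs_sub_le (w x) (t x) (s x); linarith
    _ = |u x - v x| + |v x - w x| + |w x - t x| + |t x - s x| := by ring

lemma my_l1_symm (u v : X → ℝ) :
    l1 (fun x => u x - v x) = l1 (fun x => v x - u x) := by
  unfold l1; exact Finset.sum_congr rfl fun x _ => abs_sub_comm _ _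

end MyAux5
/-- convergence of the idealized two-timescale MFG scheme
(μ faster to 0, i.e. ρ^μ_n/ρ^Q_n → 0) to (μ*φ, Q*_{μ*φ}). -/
theorem mfg_two_timescale_convergence [Fintype X] [Fintype A] [Nonempty X] [Nonempty A]
    (γ : ℝ) (hγ0 : 0 < γ) (hγ1 : γ < 1)
    (f : X → A → (X → ℝ) → ℝ) (fnorm : ℝ)
    (hf : ∀ x a μ, IsProb μ → |f x a μ| ≤ fnorm)
    (p : X → A → (X → ℝ) → X → ℝ)
    (hp0 : ∀ x a μ x', IsProb μ → 0 ≤ p x a μ x')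
    (hp1 : ∀ x a μ, IsProb μ → ∑ x', p x a μ x' = 1)
    (cmin Lf Lp : ℝ) (hcmin0 : 0 ≤ cmin)
    (hcmin : ∀ x a μ x', IsProb μ → cmin ≤ p x a μ x')
    (hLf0 : 0 ≤ Lf) (hLp0 : 0 ≤ Lp)
    (hLf : ∀ x a μ μ', IsProb μ → IsProb μ' →
      |f x a μ - f x a μ'| ≤ Lf * l1 (fun y => μ y - μ' y))
    (hLp : ∀ x a μ μ', IsProb μ → IsProb μ' →
      ∑ x', |p x a μ x' - p x a μ' x'| ≤ Lp * l1 (fun y => μ y - μ' y))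
    (hLpc : Lp < (Fintype.card X : ℝ) * cmin)
    (φ : ℝ) (hφ0 : 0 < φ)
    (hφmax : φ < ((Fintype.card X : ℝ) * cmin - Lp) / (Fintype.card A : ℝ)
        * ((1 - γ) / (Lf + (γ / (1 - γ)) * Lp * fnorm)))
    -- Q*_μ : the unique fixed point of B_μ
    (Qstar : (X → ℝ) → X → A → ℝ)
    (hQstar : ∀ μ, IsProb μ → bell f p γ μ (Qstar μ) = Qstar μ)
    -- μ*φ : the unique fixed point of μ ↦ P^{softmin_φ Q*_μ, μ} μ
    (μstar : X → ℝ) (hμstar : IsProb μstar)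
    (hμstarfix : Ppush p (fun x' => softmin φ (Qstar μstar x')) μstar μstar = μstar)
    -- learning rates
    (ρQ ρμ : ℕ → ℝ)
    (hρQ : ∀ n, 0 < ρQ n ∧ ρQ n < 1) (hρμ : ∀ n, 0 < ρμ n ∧ ρμ n < 1)
    (hdivQ : ¬ Summable ρQ) (hdivμ : ¬ Summable ρμ)
    (hsq : Summable (fun n => (ρQ n) ^ 2 + (ρμ n) ^ 2))
    (hratio : Filter.Tendsto (fun n => ρμ n / ρQ n) Filter.atTop (nhds 0))
    -- the iterates
    (μseq : ℕ → X → ℝ) (Qseq : ℕ → X → A → ℝ)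
    (hμ0 : IsProb (μseq 0))
    (hμrec : ∀ n, μseq (n + 1) = fun x => μseq n x + ρμ n * P2 φ p (Qseq n) (μseq n) x)
    (hQrec : ∀ n, Qseq (n + 1) = fun x a => Qseq n x a + ρQ n * T2 f p γ (Qseq n) (μseq n) x a) :
    Filter.Tendsto μseq Filter.atTop (nhds μstar)
      ∧ Filter.Tendsto Qseq Filter.atTop (nhds (Qstar μstar)) := by
  classical
  obtain ⟨x0⟩ := (inferInstance : Nonempty X)
  obtain ⟨a0⟩ := (inferInstance : Nonempty A)
  have hγ1' : 0 < 1 - γ := by linarith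
  have hcardX : (0:ℝ) < (Fintype.card X : ℝ) := by
    exact_mod_cast Fintype.card_pos
  have hcardA : (0:ℝ) < (Fintype.card A : ℝ) := by
    exact_mod_cast Fintype.card_pos
  have huni : IsProb (fun _ : X => (Fintype.card X : ℝ)⁻¹) := by
    constructor
    · intro x; positivity
    · rw [Finset.sum_const, Finset.card_univ, nsmul_eq_mul, mul_inv_cancel₀ (ne_of_gt hcardX)]
  have hfnorm0 : 0 ≤ fnorm := le_trans (abs_nonneg _) (hf x0 a0 _ huni)
  set Mstar : ℝ := fnorm / (1 - γ) with hMstar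
  set LQ : ℝ := (Lf + γ * Lp * Mstar) / (1 - γ) with hLQ
  have hMstar0 : 0 ≤ Mstar := by positivity
  have hLQ0 : 0 ≤ LQ := by
    rw [hLQ]
    have : 0 ≤ Lf + γ * Lp * Mstar := by positivity
    positivity
  -- key numeric inequality
  have hkey : (Fintype.card A : ℝ) * φ * LQ < (Fintype.card X : ℝ) * cmin - Lp := by
    have hDen : Lf + γ / (1 - γ) * Lp * fnorm = LQ * (1 - γ) := by
      rw [hLQ, hMstar]; field_simp
    rcases eq_or_lt_of_le hLQ0 with h0 | h0
    · rw [← h0]; simpa using sub_pos.2 hLpc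
    · have h1 : ((1 - γ) / (Lf + γ / (1 - γ) * Lp * fnorm)) = 1 / LQ := by
        rw [hDen, div_eq_div_iff (by positivity) (ne_of_gt h0)]
        ring
      have h3 : φ < ((Fintype.card X : ℝ) * cmin - Lp) / ((Fintype.card A : ℝ) * LQ) := by
        rw [h1] at hφmax
        calc φ < ((Fintype.card X : ℝ) * cmin - Lp) / (Fintype.card A : ℝ) * (1 / LQ) := hφmax
          _ = ((Fintype.card X : ℝ) * cmin - Lp) / ((Fintype.card A : ℝ) * LQ) := by
              rw [div_mul_div_comm, mul_one]
      have h2 : (Fintype.card A : ℝ) * φ * LQ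
          < ((Fintype.card X : ℝ) * cmin - Lp) := by
        calc (Fintype.card A : ℝ) * φ * LQ = φ * ((Fintype.card A : ℝ) * LQ) := by ring
          _ < ((Fintype.card X : ℝ) * cmin - Lp) / ((Fintype.card A : ℝ) * LQ)
              * ((Fintype.card A : ℝ) * LQ) := mul_lt_mul_of_pos_right h3 (by positivity)
          _ = ((Fintype.card X : ℝ) * cmin - Lp) := by field_simp
      linarith [h2]
  set κ : ℝ := 1 - (Fintype.card X : ℝ) * cmin + Lp + (Fintype.card A : ℝ) * φ * LQ with hκ
  have hκ1 : κ < 1 := by rw [hκ]; linarith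
  have hXc1 : (Fintype.card X : ℝ) * cmin ≤ 1 := by
    have h1 := hp1 x0 a0 _ huni
    calc (Fintype.card X : ℝ) * cmin = ∑ _x' : X, cmin := by
          rw [Finset.sum_const, Finset.card_univ, nsmul_eq_mul]
      _ ≤ ∑ x', p x0 a0 (fun _ : X => (Fintype.card X : ℝ)⁻¹) x' :=
          Finset.sum_le_sum fun x' _ => hcmin x0 a0 _ x' huni
      _ = 1 := h1
  have hκ0 : 0 ≤ κ := by
    rw [hκ]
    have : 0 ≤ (Fintype.card A : ℝ) * φ * LQ := by positivity
    linarith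
  -- all iterates are probability vectors
  have hprob : ∀ n, IsProb (μseq n) := by
    intro n; induction n with
    | zero => exact hμ0
    | succ n ih =>
      have hP : IsProb (Ppush p (fun x' => softmin φ (Qseq n x')) (μseq n) (μseq n)) :=
        my_ppush_prob p _ _ _ (fun x a => my_softmin_nonneg φ _ a)
          (fun x => my_softmin_sum φ _) (fun x a x' => hp0 x a _ x' ih)
          (fun x a => hp1 x a _ ih) ih
      rw [hμrec n]
      constructor
      · intro x
        simp only [P2]
        have h1 := (hρμ n).1; have h2 := (hρμ n).2
        have h3 := hP.1 x; have h4 := ih.1 x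
        nlinarith
      · simp only [P2]
        have : ∑ x, (μseq n x + ρμ n * (Ppush p (fun x' => softmin φ (Qseq n x')) (μseq n) (μseq n) x - μseq n x))
            = ∑ x, μseq n x + ρμ n * (∑ x, Ppush p (fun x' => softmin φ (Qseq n x')) (μseq n) (μseq n) x - ∑ x, μseq n x) := by
          rw [Finset.sum_add_distrib, ← Finset.mul_sum, Finset.sum_sub_distrib]
        rw [this, hP.2, ih.2]; ring
  -- bound on Qstar
  have hQstarB : ∀ μ, IsProb μ → ∀ x a, |Qstar μ x a| ≤ Mstar := by
    intro μ hμ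
    have h : ∀ x a, |Qstar μ x a| ≤ fnorm + γ * supQ (Qstar μ) := by
      intro x a
      rw [show Qstar μ x a = bell f p γ μ (Qstar μ) x a from
        (congrFun (congrFun (hQstar μ hμ) x) a).symm]
      unfold bell
      calc |f x a μ + γ * ∑ x', p x a μ x' * minRow (Qstar μ x')|
          ≤ |f x a μ| + |γ * ∑ x', p x a μ x' * minRow (Qstar μ x')| := abs_add_le _ _
        _ ≤ fnorm + γ * supQ (Qstar μ) := by
            refine add_le_add (hf x a μ hμ) ?_
            rw [abs_mul, abs_of_nonneg hγ0.le]
            refine mul_le_mul_of_nonneg_left ?_ hγ0.le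
            calc |∑ x', p x a μ x' * minRow (Qstar μ x')|
                ≤ ∑ x', |p x a μ x' * minRow (Qstar μ x')| := Finset.abs_sum_le_sum_abs _ _
              _ ≤ ∑ x', p x a μ x' * supQ (Qstar μ) := by
                  apply Finset.sum_le_sum; intro x' _
                  rw [abs_mul, abs_of_nonneg (hp0 x a μ x' hμ)]
                  exact mul_le_mul_of_nonneg_left
                    (my_abs_minRow_le fun a' => my_le_supQ _ x' a') (hp0 x a μ x' hμ)
              _ = supQ (Qstar μ) := by rw [← Finset.sum_mul, hp1 x a μ hμ, one_mul]
    have h2 : supQ (Qstar μ) ≤ fnorm + γ * supQ (Qstar μ) := my_supQ_le h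
    have h3 : supQ (Qstar μ) ≤ Mstar := by
      rw [hMstar, le_div_iff₀ hγ1']; nlinarith
    intro x a; exact le_trans (my_le_supQ _ x a) h3
  -- Bellman contraction
  have hbellc : ∀ (μ : X → ℝ), IsProb μ → ∀ (Q Q' : X → A → ℝ) (M : ℝ),
      (∀ x a, |Q x a - Q' x a| ≤ M) →
      ∀ x a, |bell f p γ μ Q x a - bell f p γ μ Q' x a| ≤ γ * M := by
    intro μ hμ Q Q' M hM x a
    have hM0 : 0 ≤ M := le_trans (abs_nonneg _) (hM x0 a0)
    have e : bell f p γ μ Q x a - bell f p γ μ Q' x a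
        = γ * ∑ x', p x a μ x' * (minRow (Q x') - minRow (Q' x')) := by
      unfold bell
      have h : ∑ x', p x a μ x' * (minRow (Q x') - minRow (Q' x'))
          = ∑ x', p x a μ x' * minRow (Q x') - ∑ x', p x a μ x' * minRow (Q' x') := by
        rw [← Finset.sum_sub_distrib]
        exact Finset.sum_congr rfl fun x' _ => by ring
      rw [h]; ring
    rw [e, abs_mul, abs_of_nonneg hγ0.le]
    refine mul_le_mul_of_nonneg_left ?_ hγ0.le
    calc |∑ x', p x a μ x' * (minRow (Q x') - minRow (Q' x'))|
        ≤ ∑ x', |p x a μ x' * (minRow (Q x') - minRow (Q' x'))| := Finset.abs_sum_le_sum_abs _ _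
      _ ≤ ∑ x', p x a μ x' * M := by
          apply Finset.sum_le_sum; intro x' _
          rw [abs_mul, abs_of_nonneg (hp0 x a μ x' hμ)]
          exact mul_le_mul_of_nonneg_left
            (my_abs_minRow_sub fun a' => hM x' a') (hp0 x a μ x' hμ)
      _ = M := by rw [← Finset.sum_mul, hp1 x a μ hμ, one_mul]
  -- Lipschitz continuity of Qstar in μ
  have hQstarLip : ∀ μ μ', IsProb μ → IsProb μ' → ∀ x a,
      |Qstar μ x a - Qstar μ' x a| ≤ LQ * l1 (fun y => μ y - μ' y) := by
    intro μ μ' hμ hμ'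
    set d := l1 (fun y => μ y - μ' y) with hd
    have hd0 : 0 ≤ d := my_l1_nonneg _
    set s := supQ (fun x a => Qstar μ x a - Qstar μ' x a) with hsdef
    have hs0 : 0 ≤ s := my_supQ_nonneg _
    have key : ∀ x a, |Qstar μ x a - Qstar μ' x a| ≤ γ * s + (Lf + γ * Lp * Mstar) * d := by
      intro x a
      rw [show Qstar μ x a = bell f p γ μ (Qstar μ) x a from
          (congrFun (congrFun (hQstar μ hμ) x) a).symm,
        show Qstar μ' x a = bell f p γ μ' (Qstar μ') x a from
          (congrFun (congrFun (hQstar μ' hμ')  x) a).symm]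
      have expand : bell f p γ μ (Qstar μ) x a - bell f p γ μ' (Qstar μ') x a
          = (f x a μ - f x a μ')
            + γ * (∑ x', p x a μ x' * (minRow (Qstar μ x') - minRow (Qstar μ' x')))
            + γ * (∑ x', (p x a μ x' - p x a μ' x') * minRow (Qstar μ' x')) := by
        unfold bell
        have h : ∑ x', p x a μ x' * (minRow (Qstar μ x') - minRow (Qstar μ' x'))
              + ∑ x', (p x a μ x' - p x a μ' x') * minRow (Qstar μ' x')
            = ∑ x', p x a μ x' * minRow (Qstar μ x')
              - ∑ x', p x a μ' x' * minRow (Qstar μ' x') := by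
          rw [← Finset.sum_add_distrib, ← Finset.sum_sub_distrib]
          exact Finset.sum_congr rfl fun x' _ => by ring
        nlinarith [h]
      rw [expand]
      have t1 : |f x a μ - f x a μ'| ≤ Lf * d := hLf x a μ μ' hμ hμ'
      have t2 : |γ * (∑ x', p x a μ x' * (minRow (Qstar μ x') - minRow (Qstar μ' x')))|
          ≤ γ * s := by
        rw [abs_mul, abs_of_nonneg hγ0.le]
        refine mul_le_mul_of_nonneg_left ?_ hγ0.le
        calc |∑ x', p x a μ x' * (minRow (Qstar μ x') - minRow (Qstar μ' x'))|
            ≤ ∑ x', |p x a μ x' * (minRow (Qstar μ x') - minRow (Qstar μ' x'))| :=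
              Finset.abs_sum_le_sum_abs _ _
          _ ≤ ∑ x', p x a μ x' * s := by
              apply Finset.sum_le_sum; intro x' _
              rw [abs_mul, abs_of_nonneg (hp0 x a μ x' hμ)]
              refine mul_le_mul_of_nonneg_left ?_ (hp0 x a μ x' hμ)
              exact my_abs_minRow_sub fun a' =>
                my_le_supQ (fun x a => Qstar μ x a - Qstar μ' x a) x' a'
          _ = s := by rw [← Finset.sum_mul, hp1 x a μ hμ, one_mul]
      have t3 : |γ * (∑ x', (p x a μ x' - p x a μ' x') * minRow (Qstar μ' x'))|
          ≤ γ * (Lp * d * Mstar) := by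
        rw [abs_mul, abs_of_nonneg hγ0.le]
        refine mul_le_mul_of_nonneg_left ?_ hγ0.le
        calc |∑ x', (p x a μ x' - p x a μ' x') * minRow (Qstar μ' x')|
            ≤ ∑ x', |(p x a μ x' - p x a μ' x')| * |minRow (Qstar μ' x')| := by
              refine le_trans (Finset.abs_sum_le_sum_abs _ _)
                (Finset.sum_le_sum fun x' _ => le_of_eq (abs_mul _ _))
          _ ≤ ∑ x', |(p x a μ x' - p x a μ' x')| * Mstar := by
              apply Finset.sum_le_sum; intro x' _
              exact mul_le_mul_of_nonneg_left
                (my_abs_minRow_le fun a' => hQstarB μ' hμ' x' a') (abs_nonneg _)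
          _ = (∑ x', |(p x a μ x' - p x a μ' x')|) * Mstar := by rw [Finset.sum_mul]
          _ ≤ Lp * d * Mstar :=
              mul_le_mul_of_nonneg_right (hLp x a μ μ' hμ hμ') hMstar0
      calc |(f x a μ - f x a μ')
            + γ * (∑ x', p x a μ x' * (minRow (Qstar μ x') - minRow (Qstar μ' x')))
            + γ * (∑ x', (p x a μ x' - p x a μ' x') * minRow (Qstar μ' x'))|
          ≤ |f x a μ - f x a μ'|
            + |γ * (∑ x', p x a μ x' * (minRow (Qstar μ x') - minRow (Qstar μ' x')))|
            + |γ * (∑ x', (p x a μ x' - p x a μ' x') * minRow (Qstar μ' x'))| := by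
            refine le_trans (abs_add_le _ _) ?_
            have := abs_add_le (f x a μ - f x a μ')
              (γ * (∑ x', p x a μ x' * (minRow (Qstar μ x') - minRow (Qstar μ' x'))))
            linarith
        _ ≤ Lf * d + γ * s + γ * (Lp * d * Mstar) := by linarith
        _ = γ * s + (Lf + γ * Lp * Mstar) * d := by ring
    have hs : s ≤ γ * s + (Lf + γ * Lp * Mstar) * d := my_supQ_le key
    have hs2 : s ≤ LQ * d := by
      rw [hLQ, div_mul_eq_mul_div, le_div_iff₀ hγ1']
      nlinarith
    intro x a
    exact le_trans (my_le_supQ (fun x a => Qstar μ x a - Qstar μ' x a) x a) hs2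
  -- tracking sequences
  set aN : ℕ → ℝ := fun n => supQ (fun x a => Qseq n x a - Qstar (μseq n) x a) with haN
  set bN : ℕ → ℝ := fun n => l1 (fun x => μseq n x - μstar x) with hbN
  have haN0 : ∀ n, 0 ≤ aN n := fun n => my_supQ_nonneg _
  have hbN0 : ∀ n, 0 ≤ bN n := fun n => my_l1_nonneg _
  -- step bound on μ
  have hμdiff : ∀ n, l1 (fun x => μseq (n + 1) x - μseq n x) ≤ ρμ n * 2 := by
    intro n
    have hP : IsProb (Ppush p (fun x' => softmin φ (Qseq n x')) (μseq n) (μseq n)) :=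
      my_ppush_prob p _ _ _ (fun x a => my_softmin_nonneg φ _ a)
        (fun x => my_softmin_sum φ _) (fun x a x' => hp0 x a _ x' (hprob n))
        (fun x a => hp1 x a _ (hprob n)) (hprob n)
    have e : ∀ x, μseq (n + 1) x - μseq n x = ρμ n * P2 φ p (Qseq n) (μseq n) x := by
      intro x; simp only [hμrec n]; ring
    unfold l1
    calc ∑ x, |μseq (n + 1) x - μseq n x| = ∑ x, ρμ n * |P2 φ p (Qseq n) (μseq n) x| := by
          apply Finset.sum_congr rfl; intro x _
          rw [e x, abs_mul, abs_of_nonneg (hρμ n).1.le]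
      _ ≤ ρμ n * 2 := by
          rw [← Finset.mul_sum]
          refine mul_le_mul_of_nonneg_left ?_ (hρμ n).1.le
          calc ∑ x, |P2 φ p (Qseq n) (μseq n) x|
              ≤ ∑ x, (|Ppush p (fun x' => softmin φ (Qseq n x')) (μseq n) (μseq n) x| + |μseq n x|) := by
                apply Finset.sum_le_sum; intro x _
                simp only [P2]
                exact abs_sub _ _
            _ = 2 := by
                rw [Finset.sum_add_distrib]
                rw [Finset.sum_congr rfl fun x _ => abs_of_nonneg (hP.1 x),
                  Finset.sum_congr rfl fun x _ => abs_of_nonneg ((hprob n).1 x), hP.2, (hprob n).2]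
                norm_num
  -- Q tracking recursion
  have haRec : ∀ n, aN (n + 1) ≤ (1 - (1 - γ) * ρQ n) * aN n + ρQ n * (2 * LQ * (ρμ n / ρQ n)) := by
    intro n
    have hQn1 : ∀ x a, |Qseq (n + 1) x a - Qstar (μseq n) x a| ≤ (1 - (1 - γ) * ρQ n) * aN n := by
      intro x a
      have e : Qseq (n + 1) x a - Qstar (μseq n) x a
          = (1 - ρQ n) * (Qseq n x a - Qstar (μseq n) x a)
            + ρQ n * (bell f p γ (μseq n) (Qseq n) x a
              - bell f p γ (μseq n) (Qstar (μseq n)) x a) := by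
        rw [hQrec n]
        simp only [T2]
        rw [show bell f p γ (μseq n) (Qstar (μseq n)) x a = Qstar (μseq n) x a from
          congrFun (congrFun (hQstar _ (hprob n)) x) a]
        ring
      rw [e]
      have h1 : |bell f p γ (μseq n) (Qseq n) x a - bell f p γ (μseq n) (Qstar (μseq n)) x a|
          ≤ γ * aN n :=
        hbellc (μseq n) (hprob n) _ _ (aN n)
          (fun x a => my_le_supQ (fun x a => Qseq n x a - Qstar (μseq n) x a) x a) x a
      have h2 : |Qseq n x a - Qstar (μseq n) x a| ≤ aN n :=
        my_le_supQ (fun x a => Qseq n x a - Qstar (μseq n) x a) x a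
      have h3 := (hρQ n).1; have h4 := (hρQ n).2
      calc |(1 - ρQ n) * (Qseq n x a - Qstar (μseq n) x a)
            + ρQ n * (bell f p γ (μseq n) (Qseq n) x a - bell f p γ (μseq n) (Qstar (μseq n)) x a)|
          ≤ |(1 - ρQ n) * (Qseq n x a - Qstar (μseq n) x a)|
            + |ρQ n * (bell f p γ (μseq n) (Qseq n) x a
              - bell f p γ (μseq n) (Qstar (μseq n)) x a)| := abs_add_le _ _
        _ ≤ (1 - ρQ n) * aN n + ρQ n * (γ * aN n) := by
            rw [abs_mul, abs_mul, abs_of_nonneg (by linarith : (0:ℝ) ≤ 1 - ρQ n),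
              abs_of_nonneg h3.le]
            exact add_le_add (mul_le_mul_of_nonneg_left h2 (by linarith))
              (mul_le_mul_of_nonneg_left h1 h3.le)
        _ = (1 - (1 - γ) * ρQ n) * aN n := by ring
    have drift : ∀ x a, |Qstar (μseq n) x a - Qstar (μseq (n + 1)) x a| ≤ LQ * (ρμ n * 2) := by
      intro x a
      refine le_trans (hQstarLip _ _ (hprob n) (hprob (n + 1)) x a) ?_
      refine mul_le_mul_of_nonneg_left ?_ hLQ0
      rw [my_l1_symm]
      exact hμdiff n
    have hfin : ρQ n * (2 * LQ * (ρμ n / ρQ n)) = LQ * (ρμ n * 2) := by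
      have hρ : (ρQ n) ≠ 0 := ne_of_gt (hρQ n).1
      field_simp
    rw [hfin]
    apply my_supQ_le
    intro x a
    calc |Qseq (n + 1) x a - Qstar (μseq (n + 1)) x a|
        ≤ |Qseq (n + 1) x a - Qstar (μseq n) x a|
          + |Qstar (μseq n) x a - Qstar (μseq (n + 1)) x a| := abs_sub_le _ _ _
      _ ≤ (1 - (1 - γ) * ρQ n) * aN n + LQ * (ρμ n * 2) :=
          add_le_add (hQn1 x a) (drift x a)
  -- μ tracking recursion
  have hbRec : ∀ n, bN (n + 1) ≤ (1 - (1 - κ) * ρμ n) * bN n + ρμ n * (2 * φ * aN n) := by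
    intro n
    have hπn0 : ∀ (Q : X → A → ℝ) (x : X) (a : A), 0 ≤ softmin φ (Q x) a :=
      fun Q x a => my_softmin_nonneg φ _ a
    have hπn1 : ∀ (Q : X → A → ℝ) (x : X), ∑ a, softmin φ (Q x) a = 1 :=
      fun Q x => my_softmin_sum φ _
    -- the four intermediate measures
    set Pn : X → ℝ := Ppush p (fun x' => softmin φ (Qseq n x')) (μseq n) (μseq n) with hPn
    set R1 : X → ℝ := Ppush p (fun x' => softmin φ (Qstar (μseq n) x')) (μseq n) (μseq n) with hR1
    set R2 : X → ℝ := Ppush p (fun x' => softmin φ (Qstar (μseq n) x')) (μseq n) μstar with hR2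
    set R3 : X → ℝ := Ppush p (fun x' => softmin φ (Qstar (μseq n) x')) μstar μstar with hR3
    -- t1 : policy variation (Qseq n vs Qstar μseq n)
    have t1 : l1 (fun x => Pn x - R1 x) ≤ 2 * φ * aN n := by
      refine my_ppush_pi_var p _ _ _ _ _ (hprob n) (fun x a x' => hp0 x a _ x' (hprob n))
        (fun x a => hp1 x a _ (hprob n)) ?_
      intro x'
      exact my_softmin_lip φ hφ0.le (Qstar (μseq n) x') (Qseq n x') (aN n)
        (fun a => my_le_supQ (fun x a => Qseq n x a - Qstar (μseq n) x a) x' a)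
    -- t2 : Dobrushin contraction in ν
    have t2 : l1 (fun x => R1 x - R2 x) ≤ (1 - (Fintype.card X : ℝ) * cmin) * bN n := by
      set K : X → X → ℝ := fun x' x => ∑ a, softmin φ (Qstar (μseq n) x') a * p x' a (μseq n) x
        with hK
      set m : X → ℝ := fun x' => μseq n x' - μstar x' with hm
      have hKc : ∀ x' x, cmin ≤ K x' x := by
        intro x' x
        have h1 : cmin = (∑ a, softmin φ (Qstar (μseq n) x') a) * cmin := by
          rw [hπn1, one_mul]
        rw [hK]; dsimp only
        calc cmin = ∑ a, softmin φ (Qstar (μseq n) x') a * cmin := by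
              rw [← Finset.sum_mul, hπn1, one_mul]
          _ ≤ ∑ a, softmin φ (Qstar (μseq n) x') a * p x' a (μseq n) x :=
              Finset.sum_le_sum fun a _ =>
                mul_le_mul_of_nonneg_left (hcmin x' a _ x (hprob n)) (hπn0 _ x' a)
      have hK1 : ∀ x', ∑ x, K x' x = 1 := by
        intro x'
        rw [hK]; dsimp only
        rw [Finset.sum_comm]
        calc ∑ a, ∑ x, softmin φ (Qstar (μseq n) x') a * p x' a (μseq n) x
            = ∑ a, softmin φ (Qstar (μseq n) x') a := by
              apply Finset.sum_congr rfl; intro a _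
              rw [← Finset.mul_sum, hp1 x' a _ (hprob n), mul_one]
          _ = 1 := hπn1 _ x'
      have hm0 : ∑ x', m x' = 0 := by
        rw [hm]; dsimp only
        rw [Finset.sum_sub_distrib, (hprob n).2, hμstar.2]; ring
      have hpt : ∀ x, R1 x - R2 x = ∑ x', m x' * K x' x := by
        intro x
        rw [hR1, hR2, hm, hK]; unfold Ppush; dsimp only
        rw [← Finset.sum_sub_distrib]
        exact Finset.sum_congr rfl fun x' _ => by ring
      have := my_dobrushin cmin K m hKc hK1 hm0
      unfold l1
      calc ∑ x, |R1 x - R2 x| = ∑ x, |∑ x', m x' * K x' x| :=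
            Finset.sum_congr rfl fun x _ => by rw [hpt x]
        _ ≤ (1 - (Fintype.card X : ℝ) * cmin) * ∑ x', |m x'| := this
        _ = (1 - (Fintype.card X : ℝ) * cmin) * bN n := rfl
    -- t3 : kernel μ variation
    have t3 : l1 (fun x => R2 x - R3 x) ≤ Lp * bN n := by
      refine my_ppush_mu_var p _ _ _ _ (Lp * bN n) hμstar (hπn0 _) (hπn1 _) ?_
      intro x a
      exact hLp x a _ _ (hprob n) hμstar
    -- t4 : policy variation (Qstar μseq n vs Qstar μstar)
    have t4 : l1 (fun x => R3 x - μstar x) ≤ (Fintype.card A : ℝ) * φ * (LQ * bN n) := by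
      have h := my_ppush_pi_var p (fun x' => softmin φ (Qstar (μseq n) x'))
        (fun x' => softmin φ (Qstar μstar x')) μstar μstar
        ((Fintype.card A : ℝ) * φ * (LQ * bN n)) hμstar
        (fun x a x' => hp0 x a _ x' hμstar) (fun x a => hp1 x a _ hμstar) ?_
      · have he : (fun x => R3 x - μstar x)
            = fun x => R3 x - Ppush p (fun x' => softmin φ (Qstar μstar x')) μstar μstar x := by
          rw [hμstarfix]
        rw [he]
        exact h
      · intro x'
        exact my_softmin_lipA φ hφ0.le (Qstar μstar x') (Qstar (μseq n) x') (LQ * bN n)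
          (mul_nonneg hLQ0 (hbN0 n))
          (fun a => hQstarLip _ _ (hprob n) hμstar x' a)
    -- combine the four terms
    have hL : l1 (fun x => Pn x - μstar x) ≤ 2 * φ * aN n + κ * bN n := by
      refine le_trans (my_l1_tri4 Pn R1 R2 R3 μstar) ?_
      rw [hκ]
      have := t1; have := t2; have := t3; have := t4
      nlinarith [hbN0 n]
    -- pointwise recursion
    have hpt : ∀ x, μseq (n + 1) x - μstar x
        = (1 - ρμ n) * (μseq n x - μstar x) + ρμ n * (Pn x - μstar x) := by
      intro x
      simp only [hμrec n, P2, hPn]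
      ring
    have h0 : bN (n + 1) ≤ (1 - ρμ n) * bN n + ρμ n * l1 (fun x => Pn x - μstar x) := by
      have h1 := (hρμ n).1; have h2 := (hρμ n).2
      show l1 (fun x => μseq (n + 1) x - μstar x) ≤ _
      unfold l1
      calc ∑ x, |μseq (n + 1) x - μstar x|
          ≤ ∑ x, ((1 - ρμ n) * |μseq n x - μstar x| + ρμ n * |Pn x - μstar x|) := by
            apply Finset.sum_le_sum; intro x _
            rw [hpt x]
            refine le_trans (abs_add_le _ _) ?_
            rw [abs_mul, abs_mul, abs_of_nonneg (by linarith : (0:ℝ) ≤ 1 - ρμ n),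
              abs_of_nonneg h1.le]
        _ = (1 - ρμ n) * bN n + ρμ n * l1 (fun x => Pn x - μstar x) := by
            rw [Finset.sum_add_distrib, ← Finset.mul_sum, ← Finset.mul_sum]
            rfl
    have h2 : ρμ n * l1 (fun x => Pn x - μstar x) ≤ ρμ n * (2 * φ * aN n + κ * bN n) :=
      mul_le_mul_of_nonneg_left hL (hρμ n).1.le
    have he : (1 - (1 - κ) * ρμ n) * bN n + ρμ n * (2 * φ * aN n)
        = (1 - ρμ n) * bN n + ρμ n * (2 * φ * aN n + κ * bN n) := by ring
    rw [he]
    linarith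
  -- convergence of the tracking error aN
  have haT : Filter.Tendsto aN Filter.atTop (nhds 0) := by
    refine my_rec_tendsto aN ρQ (fun n => 2 * LQ * (ρμ n / ρQ n)) (1 - γ) hγ1'
      (by linarith) haN0 (fun n => (hρQ n).1) (fun n => (hρQ n).2) hdivQ ?_ haRec
    have := hratio.const_mul (2 * LQ)
    simpa using this
  -- convergence of bN
  have hbT : Filter.Tendsto bN Filter.atTop (nhds 0) := by
    refine my_rec_tendsto bN ρμ (fun n => 2 * φ * aN n) (1 - κ) (by linarith)
      (by linarith) hbN0 (fun n => (hρμ n).1) (fun n => (hρμ n).2) hdivμ ?_ hbRec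
    have := haT.const_mul (2 * φ)
    simpa using this
  constructor
  · rw [tendsto_pi_nhds]
    intro x
    rw [tendsto_iff_dist_tendsto_zero]
    refine squeeze_zero (fun n => dist_nonneg) (fun n => ?_) hbT
    rw [Real.dist_eq]
    exact my_abs_le_l1 (fun y => μseq n y - μstar y) x
  · rw [tendsto_pi_nhds]
    intro x
    rw [tendsto_pi_nhds]
    intro a
    rw [tendsto_iff_dist_tendsto_zero]
    have hlim : Filter.Tendsto (fun n => aN n + LQ * bN n) Filter.atTop (nhds 0) := by
      have := haT.add (hbT.const_mul LQ)
      simpa using this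
    refine squeeze_zero (fun n => dist_nonneg) (fun n => ?_) hlim
    rw [Real.dist_eq]
    calc |Qseq n x a - Qstar μstar x a|
        ≤ |Qseq n x a - Qstar (μseq n) x a| + |Qstar (μseq n) x a - Qstar μstar x a| :=
          abs_sub_le _ _ _
      _ ≤ aN n + LQ * bN n :=
          add_le_add (my_le_supQ (fun x a => Qseq n x a - Qstar (μseq n) x a) x a)
            (hQstarLip _ _ (hprob n) hμstar x a)
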